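/- For any q > 0 and T > 0, the function y ↦ exp(𝓗_q(y)/T) is integrable over ℝ^{F×R}; hence it can be normalized to a probability density. -/

import Mathlib

open scoped BigOperators
open MeasureTheory

noncomputable def Q (F R : ℕ) (y : EuclideanSpace ℝ (Fin F × Fin R)) : ℝ :=
  -(1/2) * ∑ r : Fin R,
    ((∑ φ : Fin F, (y (φ, r))^2 - 1)^2 + ∑ φ : Fin F, (y (φ, r))^2 * (1 - y (φ, r))^2)

noncomputable def Hq (F R : ℕ) (W : Matrix (Fin F × Fin R) (Fin F × Fin R) ℝ)
    (b : EuclideanSpace ℝ (Fin F × Fin R)) (q : ℝ)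
    (y : EuclideanSpace ℝ (Fin F × Fin R)) : ℝ :=
  ((1/2) * ∑ p : Fin F × Fin R, y p * W.mulVec y p + ∑ p : Fin F × Fin R, b p * y p)
    + q * Q F R y

lemma gauss_int (ι : Type*) [Fintype ι] :
    Integrable (fun v : EuclideanSpace ℝ ι => Real.exp (-‖v‖^2)) volume := by
  have h := (GaussianFourier.integrable_cexp_neg_mul_sq_norm_add
      (V := EuclideanSpace ℝ ι) (b := 1) (by norm_num) 0 0).norm
  simp only [zero_mul, add_zero, neg_mul, one_mul, Complex.norm_exp,
    Complex.neg_re, ← Complex.ofReal_pow, Complex.ofReal_re] at h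
  exact h

lemma quad_bound {n : Type*} [Fintype n] (W : Matrix n n ℝ) (y : n → ℝ) :
    ∑ p, y p * W.mulVec y p ≤ (∑ p, ∑ j, |W p j|) * ∑ p, (y p)^2 := by
  have hS : ∀ p, (y p)^2 ≤ ∑ p, (y p)^2 := fun p =>
    Finset.single_le_sum (fun i _ => sq_nonneg (y i)) (Finset.mem_univ p)
  calc ∑ p, y p * W.mulVec y p
      = ∑ p, ∑ j, y p * (W p j * y j) := by
        simp [Matrix.mulVec, dotProduct, Finset.mul_sum]
    _ ≤ ∑ p, ∑ j, |W p j| * ∑ i, (y i)^2 := by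
        refine Finset.sum_le_sum fun p _ => Finset.sum_le_sum fun j _ => ?_
        have h1 : y p * (W p j * y j) ≤ |W p j| * (|y p| * |y j|) := by
          calc y p * (W p j * y j) ≤ |y p * (W p j * y j)| := le_abs_self _
            _ = |W p j| * (|y p| * |y j|) := by rw [abs_mul, abs_mul]; ring
        refine h1.trans ?_
        refine mul_le_mul_of_nonneg_left ?_ (abs_nonneg _)
        have h2 : |y p| * |y j| ≤ ((y p)^2 + (y j)^2)/2 := by
          nlinarith [sq_nonneg (|y p| - |y j|), sq_abs (y p), sq_abs (y j)]
        refine h2.trans ?_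
        have := hS p; have := hS j; linarith
    _ = (∑ p, ∑ j, |W p j|) * ∑ p, (y p)^2 := by
        rw [Finset.sum_mul]; congr 1; ext p; rw [Finset.sum_mul]

lemma Q_bound (F R : ℕ) (hR : 0 < R) (y : EuclideanSpace ℝ (Fin F × Fin R)) :
    Q F R y ≤ (R : ℝ)/2 - (∑ p : Fin F × Fin R, (y p)^2)^2 / (4*R) := by
  set S : Fin R → ℝ := fun r => ∑ φ : Fin F, (y (φ, r))^2 with hSdef
  have hsum : ∑ p : Fin F × Fin R, (y p)^2 = ∑ r, S r := by
    rw [Fintype.sum_prod_type]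
    exact Finset.sum_comm
  have h1 : Q F R y ≤ -(1/2) * ∑ r, (S r - 1)^2 := by
    unfold Q
    have : ∑ r : Fin R, ((S r - 1)^2) ≤
        ∑ r : Fin R, ((S r - 1)^2 + ∑ φ : Fin F, (y (φ, r))^2 * (1 - y (φ, r))^2) := by
      refine Finset.sum_le_sum fun r _ => ?_
      have : (0:ℝ) ≤ ∑ φ : Fin F, (y (φ, r))^2 * (1 - y (φ, r))^2 :=
        Finset.sum_nonneg fun φ _ => mul_nonneg (sq_nonneg _) (sq_nonneg _)
      linarith
    linarith
  have h2 : ∑ r, ((S r)^2/2 - 1) ≤ ∑ r, (S r - 1)^2 :=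
    Finset.sum_le_sum fun r _ => by nlinarith [sq_nonneg (S r - 2)]
  have h3 : (∑ r, S r)^2 ≤ (R : ℝ) * ∑ r, (S r)^2 := by
    have := sq_sum_le_card_mul_sum_sq (s := (Finset.univ : Finset (Fin R))) (f := S)
    simpa using this
  have hRpos : (0:ℝ) < R := by exact_mod_cast hR
  rw [hsum]
  have h4 : (∑ r, S r)^2 / (4*R) ≤ (∑ r, (S r)^2)/4 := by
    rw [div_le_div_iff₀ (by positivity) (by norm_num)]
    nlinarith
  have h5 : ∑ r, ((S r)^2/2 - 1) = (∑ r, (S r)^2)/2 - R := by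
    rw [Finset.sum_sub_distrib]
    simp [Finset.sum_div]
  linarith

theorem stmt_12 (F R : ℕ) (hF : 0 < F) (hR : 0 < R)
    (W : Matrix (Fin F × Fin R) (Fin F × Fin R) ℝ) (hW : W.IsSymm)
    (b : EuclideanSpace ℝ (Fin F × Fin R)) (q T : ℝ) (hq : 0 < q) (hT : 0 < T) :
    Integrable (fun y : EuclideanSpace ℝ (Fin F × Fin R) =>
      Real.exp (Hq F R W b q y / T)) volume := by
  set M : ℝ := ∑ p : Fin F × Fin R, ∑ j : Fin F × Fin R, |W p j| with hM
  set B : ℝ := ∑ p : Fin F × Fin R, |b p| with hB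
  have hRpos : (0:ℝ) < R := by exact_mod_cast hR
  set c : ℝ := q / (4*R*T) with hc
  have hcpos : 0 < c := by positivity
  set C1 : ℝ := (M/2 + B/2) / T with hC1
  set C0 : ℝ := (B/2 + q*R/2) / T with hC0
  set D : ℝ := C0 + (C1+1)^2/(4*c) with hD
  -- pointwise bound
  have key : ∀ y : EuclideanSpace ℝ (Fin F × Fin R),
      Hq F R W b q y / T ≤ D + (-‖y‖^2) := by
    intro y
    set S : ℝ := ∑ p : Fin F × Fin R, (y p)^2 with hS
    have hSnn : 0 ≤ S := Finset.sum_nonneg fun p _ => sq_nonneg _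
    have hnorm : ‖y‖^2 = S := by
      rw [EuclideanSpace.norm_eq, Real.sq_sqrt (Finset.sum_nonneg fun p _ => by positivity)]
      simp [hS, sq_abs]
    have hquad : ∑ p : Fin F × Fin R, y p * W.mulVec y p ≤ M * S := quad_bound W y
    have hlin : ∑ p : Fin F × Fin R, b p * y p ≤ B * ((1+S)/2) := by
      rw [hB, Finset.sum_mul]
      refine Finset.sum_le_sum fun p _ => ?_
      have h1 : b p * y p ≤ |b p| * |y p| := by
        calc b p * y p ≤ |b p * y p| := le_abs_self _
          _ = |b p| * |y p| := abs_mul _ _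
      refine h1.trans (mul_le_mul_of_nonneg_left ?_ (abs_nonneg _))
      have h2 : |y p| ≤ (1 + (y p)^2)/2 := by nlinarith [sq_nonneg (|y p| - 1), sq_abs (y p)]
      have h3 : (y p)^2 ≤ S :=
        Finset.single_le_sum (fun i _ => sq_nonneg (y i)) (Finset.mem_univ p)
      linarith
    have hQ : Q F R y ≤ (R : ℝ)/2 - S^2/(4*R) := Q_bound F R hR y
    have hHq : Hq F R W b q y ≤ M/2 * S + B*(1+S)/2 + q*(R/2) - q*(S^2/(4*R)) := by
      unfold Hq
      have hqQ : q * Q F R y ≤ q * ((R : ℝ)/2 - S^2/(4*R)) :=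
        mul_le_mul_of_nonneg_left hQ (le_of_lt hq)
      nlinarith [hquad, hlin]
    have hdiv : Hq F R W b q y / T ≤ C0 + C1 * S - c * S^2 := by
      rw [div_le_iff₀ hT]
      have : (C0 + C1 * S - c * S^2) * T = M/2 * S + B*(1+S)/2 + q*(R/2) - q*(S^2/(4*R)) := by
        rw [hC0, hC1, hc]
        field_simp
        ring
      rw [this]
      exact hHq
    rw [hnorm]
    have expand : ((C1+1)*S - c*S^2)*(4*c) = (C1+1)^2 - (2*c*S - (C1+1))^2 := by ring
    have key2 : ((C1+1)*S - c*S^2)*(4*c) ≤ (C1+1)^2 := by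
      have := sq_nonneg (2*c*S - (C1+1)); linarith
    have key3 : (C1+1)*S - c*S^2 ≤ (C1+1)^2/(4*c) := by
      rw [le_div_iff₀ (by positivity)]; exact key2
    have : C0 + C1 * S - c * S^2 ≤ D - S := by rw [hD]; linarith
    linarith
  -- continuity
  have hcont : Continuous fun y : EuclideanSpace ℝ (Fin F × Fin R) =>
      Real.exp (Hq F R W b q y / T) := by
    unfold Hq Q Matrix.mulVec dotProduct
    fun_prop
  refine Integrable.mono' ((gauss_int (Fin F × Fin R)).const_mul (Real.exp D))
    hcont.aestronglyMeasurable ?_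
  filter_upwards with y
  rw [Real.norm_eq_abs, abs_of_pos (Real.exp_pos _), ← Real.exp_add]
  exact Real.exp_le_exp.mpr (key y)
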